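/- Let c, k, S_init, M > 0 and D ≥ 0. Let S : ℝ → ℝ be twice differentiable and ρ : ℝ → ℝ be integrable with ∫_ℝ ρ(z) dz = M, satisfying −c S'(z) = D S''(z) − k ρ(z) for all z ∈ ℝ. If S(z) → 0 as z → −∞, S(z) → S_init as z → +∞, and S'(z) → 0 as z → ±∞, then c S_init = k M. -/
import Mathlib

open MeasureTheory Filter

/-- The wave-speed formula c S_init = k M, obtained by integrating the signal equation. -/
theorem stmt_4 (c k S_init M D : ℝ) (hc : 0 < c) (hk : 0 < k) (hS_init : 0 < S_init)
    (hM : 0 < M) (hD : 0 ≤ D) (S ρ : ℝ → ℝ)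
    (hS1 : Differentiable ℝ S) (hS2 : Differentiable ℝ (deriv S))
    (hρint : Integrable ρ) (hρM : (∫ z, ρ z) = M)
    (heq : ∀ z, -c * deriv S z = D * deriv (deriv S) z - k * ρ z)
    (hSbot : Tendsto S atBot (nhds 0)) (hStop : Tendsto S atTop (nhds S_init))
    (hS'bot : Tendsto (deriv S) atBot (nhds 0))
    (hS'top : Tendsto (deriv S) atTop (nhds 0)) :
    c * S_init = k * M := by
  set g : ℝ → ℝ := fun z => D * deriv S z + c * S z with hg
  have hderiv : ∀ z, HasDerivAt g (k * ρ z) z := by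
    intro z
    have h1 : HasDerivAt g (D * deriv (deriv S) z + c * deriv S z) z := by
      exact ((hS2 z).hasDerivAt.const_mul D).add ((hS1 z).hasDerivAt.const_mul c)
    have : D * deriv (deriv S) z + c * deriv S z = k * ρ z := by
      have := heq z; linarith
    rwa [this] at h1
  have hint : Integrable (fun z => k * ρ z) := hρint.const_mul k
  have hbot : Tendsto g atBot (nhds 0) := by
    have := (hS'bot.const_mul D).add (hSbot.const_mul c)
    simpa using this
  have htop : Tendsto g atTop (nhds (c * S_init)) := by
    have := (hS'top.const_mul D).add (hStop.const_mul c)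
    simpa using this
  have h := integral_of_hasDerivAt_of_tendsto hderiv hint hbot htop
  rw [integral_const_mul, hρM] at h
  linarith
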